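/- The eigenvalues of the four-band twister matrix H^{(4)}(k) satisfy: λ is an eigenvalue if and only if 9λ² = −5m₀² ± √(16m₀⁴ + 81e^{ik}(m₁+1)³(m₁ + e^{ik})); equivalently, the characteristic polynomial of H^{(4)}(k) equals λ⁴ + (10 m₀²/9) λ² + (m₀⁴/81 − e^{ik}(m₁+1)³(m₁ + e^{ik})) (up to the stated normalization). -/

import Mathlib

open Complex Matrix

/-- Eigenvalues of the four-band twister matrix: `μ` is an eigenvalue iff
`9μ² = −5m₀² ± √(16m₀⁴ + 81 e^{ik}(m₁+1)³(m₁+e^{ik}))`. -/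
theorem four_band_twister_eigenvalues (m₀ m₁ k : ℝ) :
    ∀ μ : ℂ, μ ∈ spectrum ℂ
      (!![Complex.I * (m₀ : ℂ), 0, 0,
            Complex.exp (2 * Complex.I * k) + (m₁ : ℂ) * Complex.exp (Complex.I * k);
          1 + (m₁ : ℂ), Complex.I * (m₀ : ℂ) / 3, 0, 0;
          0, 1 + (m₁ : ℂ), -(Complex.I * (m₀ : ℂ) / 3), 0;
          0, 0, 1 + (m₁ : ℂ), -(Complex.I * (m₀ : ℂ))] : Matrix (Fin 4) (Fin 4) ℂ) ↔
      ∃ s : ℂ, s ^ 2 = 16 * (m₀ : ℂ) ^ 4 +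
          81 * Complex.exp (Complex.I * k) * ((m₁ : ℂ) + 1) ^ 3 *
            ((m₁ : ℂ) + Complex.exp (Complex.I * k)) ∧
        9 * μ ^ 2 = -5 * (m₀ : ℂ) ^ 2 + s := by
  intro μ
  set M : Matrix (Fin 4) (Fin 4) ℂ :=
      (!![Complex.I * (m₀ : ℂ), 0, 0,
            Complex.exp (2 * Complex.I * k) + (m₁ : ℂ) * Complex.exp (Complex.I * k);
          1 + (m₁ : ℂ), Complex.I * (m₀ : ℂ) / 3, 0, 0;
          0, 1 + (m₁ : ℂ), -(Complex.I * (m₀ : ℂ) / 3), 0;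
          0, 0, 1 + (m₁ : ℂ), -(Complex.I * (m₀ : ℂ))]) with hM
  have hE : Complex.exp (2 * Complex.I * k) = Complex.exp (Complex.I * k) ^ 2 := by
    rw [← Complex.exp_nat_mul]
    norm_num
    ring_nf
  set E : ℂ := Complex.exp (Complex.I * k) with hEdef
  have hdet : μ ∈ spectrum ℂ M ↔ (algebraMap ℂ (Matrix (Fin 4) (Fin 4) ℂ) μ - M).det = 0 := by
    rw [spectrum.mem_iff, Matrix.isUnit_iff_isUnit_det, isUnit_iff_ne_zero, not_ne_iff]
  have hA : algebraMap ℂ (Matrix (Fin 4) (Fin 4) ℂ) μ - M =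
      !![μ - Complex.I * (m₀ : ℂ), 0, 0, -(E ^ 2 + (m₁ : ℂ) * E);
         -(1 + (m₁ : ℂ)), μ - Complex.I * (m₀ : ℂ) / 3, 0, 0;
         0, -(1 + (m₁ : ℂ)), μ + Complex.I * (m₀ : ℂ) / 3, 0;
         0, 0, -(1 + (m₁ : ℂ)), μ + Complex.I * (m₀ : ℂ)] := by
    ext i j
    fin_cases i <;> fin_cases j <;>
      simp [hM, Matrix.algebraMap_eq_diagonal, Matrix.diagonal, hE, hEdef,
        Matrix.vecHead, Matrix.vecTail]
  have hclean : (μ - Complex.I * (m₀ : ℂ)) * (μ - Complex.I * (m₀ : ℂ) / 3) *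
      (μ + Complex.I * (m₀ : ℂ) / 3) * (μ + Complex.I * (m₀ : ℂ)) =
      (μ ^ 2 + (m₀ : ℂ) ^ 2) * (μ ^ 2 + (m₀ : ℂ) ^ 2 / 9) := by
    have hI : (Complex.I) ^ 2 = -1 := Complex.I_sq
    linear_combination (-(10 / 9 : ℂ) * (m₀ : ℂ) ^ 2 * μ ^ 2
      + (1 / 9 : ℂ) * (m₀ : ℂ) ^ 4 * (Complex.I ^ 2 - 1)) * hI
  have hD : (!![μ - Complex.I * (m₀ : ℂ), 0, 0, -(E ^ 2 + (m₁ : ℂ) * E);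
         -(1 + (m₁ : ℂ)), μ - Complex.I * (m₀ : ℂ) / 3, 0, 0;
         0, -(1 + (m₁ : ℂ)), μ + Complex.I * (m₀ : ℂ) / 3, 0;
         0, 0, -(1 + (m₁ : ℂ)), μ + Complex.I * (m₀ : ℂ)] : Matrix (Fin 4) (Fin 4) ℂ).det =
      (μ ^ 2 + (m₀ : ℂ) ^ 2) * (μ ^ 2 + (m₀ : ℂ) ^ 2 / 9) -
        (E ^ 2 + (m₁ : ℂ) * E) * (1 + (m₁ : ℂ)) ^ 3 := by
    rw [← hclean]
    have h32 : (Fin.succAbove (3 : Fin 4) (2 : Fin 3)) = 2 := by decide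
    simp [Matrix.det_succ_row_zero, Fin.sum_univ_succ, Matrix.vecHead, Matrix.vecTail,
      Fin.castSucc, Fin.castAdd, Fin.castLE, h32]
    ring
  rw [hdet, hA, hD]
  constructor
  · intro h
    exact ⟨9 * μ ^ 2 + 5 * (m₀ : ℂ) ^ 2, by linear_combination 81 * h, by ring⟩
  · rintro ⟨s, h1, h2⟩
    have hs : s = 9 * μ ^ 2 + 5 * (m₀ : ℂ) ^ 2 := by linear_combination -h2
    rw [hs] at h1
    linear_combination (1 / 81 : ℂ) * h1
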